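/- At a composite equilibrium, if coalitions k and l satisfy T^k < T^l, then the average costs satisfy Y^k ≤ Y^l, where Y^k = (1/T^k) Σ_r x^k_r c_r(x_r). -/

import Mathlib

set_option maxHeartbeats 1000000 in
/-- At a composite equilibrium, a smaller coalition has a (weakly) smaller average cost
than a larger one. -/
theorem avg_cost_monotone_in_size {R : Type*} [Fintype R] [Nonempty R] {K : ℕ}
    (c c' : R → ℝ → ℝ)
    (x0 : R → ℝ) (x : Fin K → R → ℝ)
    (hx0 : ∀ r, 0 ≤ x0 r) (hx : ∀ k r, 0 ≤ x k r)
    (X : R → ℝ) (hX : ∀ r, X r = x0 r + ∑ k, x k r)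
    (htot : ∑ r, X r = 1)
    (hmono : ∀ r, StrictMonoOn (c r) (Set.Icc 0 1))
    (hconv : ∀ r, ConvexOn ℝ (Set.Icc 0 1) (c r))
    (hderiv : ∀ r, ∀ y ∈ Set.Icc (0:ℝ) 1, HasDerivAt (c r) (c' r y) y)
    (hcnonneg : ∀ r, ∀ y ∈ Set.Icc (0:ℝ) 1, 0 ≤ c r y)
    (heq0 : ∀ r, 0 < x0 r → ∀ s, c r (X r) ≤ c s (X s))
    (heqk : ∀ k r, 0 < x k r → ∀ s,
      c r (X r) + x k r * c' r (X r) ≤ c s (X s) + x k s * c' s (X s)) :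
    ∀ k l : Fin K, 0 < (∑ r, x k r) → (∑ r, x k r) < (∑ r, x l r) →
      (1 / ∑ r, x k r) * ∑ r, x k r * c r (X r) ≤
        (1 / ∑ r, x l r) * ∑ r, x l r * c r (X r) := by
  intro k l hTk hTkl
  -- basic facts about X
  have hX0 : ∀ r, 0 ≤ X r := by
    intro r
    rw [hX r]
    have : (0:ℝ) ≤ ∑ m, x m r := Finset.sum_nonneg fun m _ => hx m r
    linarith [hx0 r]
  have hX1 : ∀ r, X r ≤ 1 := by
    intro r
    rw [← htot]
    exact Finset.single_le_sum (fun s _ => hX0 s) (Finset.mem_univ r)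
  have hXmem : ∀ r, X r ∈ Set.Icc (0:ℝ) 1 := fun r => ⟨hX0 r, hX1 r⟩
  have hXk : ∀ (m : Fin K) r, x m r ≤ X r := by
    intro m r
    rw [hX r]
    have h1 : x m r ≤ ∑ m', x m' r :=
      Finset.single_le_sum (fun m' _ => hx m' r) (Finset.mem_univ m)
    linarith [hx0 r]
  -- positivity of the derivative at positive flow
  have hd_pos : ∀ r, 0 < X r → 0 < c' r (X r) := by
    intro r hXr
    have h0 : (0:ℝ) ∈ Set.Icc (0:ℝ) 1 := ⟨le_refl 0, zero_le_one⟩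
    have hslope : slope (c r) 0 (X r) ≤ c' r (X r) :=
      (hconv r).slope_le_of_hasDerivAt h0 (hXmem r) hXr (hderiv r _ (hXmem r))
    have hlt : c r 0 < c r (X r) := hmono r h0 (hXmem r) hXr
    rw [slope_def_field] at hslope
    have : 0 < (c r (X r) - c r 0) / (X r - 0) := by
      apply div_pos <;> simp <;> linarith
    linarith
  -- pick support elements
  have hTl : 0 < ∑ r, x l r := hTk.trans hTkl
  obtain ⟨rk, hrk⟩ : ∃ r, 0 < x k r := by
    by_contra h
    push_neg at h
    have : (∑ r, x k r) ≤ 0 := Finset.sum_nonpos fun r _ => h r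
    linarith
  obtain ⟨rl, hrl⟩ : ∃ r, 0 < x l r := by
    by_contra h
    push_neg at h
    have : (∑ r, x l r) ≤ 0 := Finset.sum_nonpos fun r _ => h r
    linarith
  set Lk := c rk (X rk) + x k rk * c' rk (X rk) with hLkdef
  set Ll := c rl (X rl) + x l rl * c' rl (X rl) with hLldef
  have hLk_le : ∀ s, Lk ≤ c s (X s) + x k s * c' s (X s) := heqk k rk hrk
  have hLl_le : ∀ s, Ll ≤ c s (X s) + x l s * c' s (X s) := heqk l rl hrl
  have hLk_eq : ∀ r, 0 < x k r → c r (X r) + x k r * c' r (X r) = Lk :=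
    fun r h => le_antisymm (heqk k r h rk) (hLk_le r)
  have hLl_eq : ∀ r, 0 < x l r → c r (X r) + x l r * c' r (X r) = Ll :=
    fun r h => le_antisymm (heqk l r h rl) (hLl_le r)
  have hdk : ∀ r, 0 < x k r → 0 < c' r (X r) :=
    fun r h => hd_pos r (lt_of_lt_of_le h (hXk k r))
  have hdl : ∀ r, 0 < x l r → 0 < c' r (X r) :=
    fun r h => hd_pos r (lt_of_lt_of_le h (hXk l r))
  -- Lk < Ll
  have hLL : Lk < Ll := by
    by_contra h
    push_neg at h
    have hpt : ∀ r, x l r ≤ x k r := by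
      intro r
      rcases (hx l r).lt_or_eq with hpos | hzero
      · have h1 := hLl_eq r hpos
        have h2 := hLk_le r
        have hd := hdl r hpos
        nlinarith
      · rw [← hzero]; exact hx k r
    have : (∑ r, x l r) ≤ ∑ r, x k r := Finset.sum_le_sum fun r _ => hpt r
    linarith
  have hΔ : 0 < Ll - Lk := by linarith
  -- on the support of k: exact relation
  have hsupp : ∀ r, 0 < x k r → x l r * c' r (X r) = x k r * c' r (X r) + (Ll - Lk) := by
    intro r h
    have hd := hdk r h
    have h1 := hLl_le r
    have h2 := hLk_eq r h
    have hxl_pos : 0 < x l r := by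
      by_contra hc
      push_neg at hc
      have hxl0 : x l r = 0 := le_antisymm hc (hx l r)
      rw [hxl0] at h1
      nlinarith
    have h3 := hLl_eq r hxl_pos
    linarith
  have hsuppx : ∀ r, 0 < x k r → 0 < x l r := by
    intro r h
    have hd := hdk r h
    have heq := hsupp r h
    nlinarith
  -- the universal upper bound
  have hub : ∀ r, x l r * c' r (X r) ≤ x k r * c' r (X r) + (Ll - Lk) := by
    intro r
    rcases (hx l r).lt_or_eq with hpos | hzero
    · have h1 := hLl_eq r hpos
      have h2 := hLk_le r
      linarith
    · rcases (hx k r).lt_or_eq with hkpos | hkzero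
      · exact absurd (hsuppx r hkpos) (by rw [← hzero]; exact lt_irrefl 0)
      · rw [← hzero, ← hkzero]; simp; linarith
  -- abbreviations
  set Tk := ∑ r, x k r with hTkdef
  set Tl := ∑ r, x l r with hTldef
  set Ak := ∑ r, (x k r)^2 * c' r (X r) with hAkdef
  set Al := ∑ r, (x l r)^2 * c' r (X r) with hAldef
  -- I1 pointwise
  have I1pt : ∀ r, (x l r)^2 * c' r (X r) ≤
      (x k r)^2 * c' r (X r) + (Ll - Lk) * x k r + (Ll - Lk) * x l r := by
    intro r
    rcases (hx k r).lt_or_eq with hkpos | hkzero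
    · exact le_of_eq (by linear_combination (x l r + x k r) * hsupp r hkpos)
    · rw [← hkzero]
      have h1 := hub r
      rw [← hkzero] at h1
      nlinarith [hx l r]
  have I1 : Al ≤ Ak + (Ll - Lk) * Tk + (Ll - Lk) * Tl := by
    have := Finset.sum_le_sum (fun r (_ : r ∈ Finset.univ) => I1pt r)
    simpa [Finset.sum_add_distrib, Finset.mul_sum, hAkdef, hAldef, hTkdef, hTldef] using this
  -- I2 via Cauchy-Schwarz on the support of k
  set S := Finset.univ.filter (fun r => 0 < x k r) with hSdef
  have hTkS : Tk = ∑ r ∈ S, x k r := by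
    rw [hTkdef]
    refine (Finset.sum_subset (Finset.filter_subset _ _) ?_).symm
    intro r _ hr
    simp only [hSdef, Finset.mem_filter, Finset.mem_univ, true_and, not_lt] at hr
    exact le_antisymm hr (hx k r)
  have hAkS : Ak = ∑ r ∈ S, (x k r)^2 * c' r (X r) := by
    rw [hAkdef]
    refine (Finset.sum_subset (Finset.filter_subset _ _) ?_).symm
    intro r _ hr
    simp only [hSdef, Finset.mem_filter, Finset.mem_univ, true_and, not_lt] at hr
    have : x k r = 0 := le_antisymm hr (hx k r)
    rw [this]; ring
  have hmemS : ∀ r ∈ S, 0 < x k r := by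
    intro r hr
    simp only [hSdef, Finset.mem_filter, Finset.mem_univ, true_and] at hr
    exact hr
  have hCS : (∑ r ∈ S, x k r)^2 ≤
      (∑ r ∈ S, (x k r)^2 * c' r (X r)) * (∑ r ∈ S, (x l r - x k r) / (Ll - Lk)) := by
    apply Finset.sum_sq_le_sum_mul_sum_of_sq_eq_mul
    · intro r hr
      have h := hmemS r hr
      exact mul_nonneg (sq_nonneg _) (hdk r h).le
    · intro r hr
      have h := hmemS r hr
      have hd := hdk r h
      have heq := hsupp r h
      have hnn : 0 ≤ x l r - x k r := by nlinarith
      exact div_nonneg hnn hΔ.le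
    · intro r hr
      have h := hmemS r hr
      have hd := hdk r h
      have heq := hsupp r h
      have hne : c' r (X r) ≠ 0 := ne_of_gt hd
      have hΔne : Ll - Lk ≠ 0 := ne_of_gt hΔ
      have h2 : c' r (X r) * ((x l r - x k r) / (Ll - Lk)) = 1 := by
        rw [mul_div_assoc', div_eq_one_iff_eq hΔne]
        linear_combination heq
      show x k r ^ 2 = x k r ^ 2 * c' r (X r) * ((x l r - x k r) / (Ll - Lk))
      rw [mul_assoc, h2, mul_one]
  have hSdiff : (∑ r ∈ S, (x l r - x k r)) ≤ Tl - Tk := by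
    have h1 : (∑ r ∈ S, (x l r - x k r)) ≤ ∑ r, (x l r - x k r) := by
      apply Finset.sum_le_sum_of_subset_of_nonneg (Finset.filter_subset _ _)
      intro r _ hr
      simp only [hSdef, Finset.mem_filter, Finset.mem_univ, true_and, not_lt] at hr
      have : x k r = 0 := le_antisymm hr (hx k r)
      rw [this]
      simpa using hx l r
    have h2 : (∑ r, (x l r - x k r)) = Tl - Tk := by
      rw [Finset.sum_sub_distrib, hTkdef, hTldef]
    linarith
  have hAk_nonneg : 0 ≤ Ak := by
    rw [hAkS]
    apply Finset.sum_nonneg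
    intro r hr
    have h := hmemS r hr
    have := hdk r h
    positivity
  have I2 : (Ll - Lk) * Tk^2 ≤ Ak * (Tl - Tk) := by
    have hΔne : Ll - Lk ≠ 0 := ne_of_gt hΔ
    have hCS' : Tk ^ 2 ≤ Ak * ((∑ r ∈ S, (x l r - x k r)) / (Ll - Lk)) := by
      rw [hTkS, hAkS, Finset.sum_div]
      exact hCS
    have h3 : Tk ^ 2 * (Ll - Lk) ≤ Ak * (∑ r ∈ S, (x l r - x k r)) := by
      have h := mul_le_mul_of_nonneg_right hCS' (le_of_lt hΔ)
      calc Tk ^ 2 * (Ll - Lk)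
          ≤ (Ak * ((∑ r ∈ S, (x l r - x k r)) / (Ll - Lk))) * (Ll - Lk) := h
        _ = Ak * (∑ r ∈ S, (x l r - x k r)) := by field_simp
    have h4 : Ak * (∑ r ∈ S, (x l r - x k r)) ≤ Ak * (Tl - Tk) :=
      mul_le_mul_of_nonneg_left hSdiff hAk_nonneg
    nlinarith
  -- rewrite the average costs
  have hsumk : (∑ r, x k r * c r (X r)) = Lk * Tk - Ak := by
    have hpt : ∀ r, x k r * c r (X r) = x k r * Lk - (x k r)^2 * c' r (X r) := by
      intro r
      rcases (hx k r).lt_or_eq with hpos | hzero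
      · have := hLk_eq r hpos
        linear_combination x k r * this
      · rw [← hzero]; ring
    calc (∑ r, x k r * c r (X r)) = ∑ r, (x k r * Lk - (x k r)^2 * c' r (X r)) :=
          Finset.sum_congr rfl (fun r _ => hpt r)
      _ = Lk * Tk - Ak := by
          rw [Finset.sum_sub_distrib, hTkdef, hAkdef, ← Finset.sum_mul]
          ring
  have hsuml : (∑ r, x l r * c r (X r)) = Ll * Tl - Al := by
    have hpt : ∀ r, x l r * c r (X r) = x l r * Ll - (x l r)^2 * c' r (X r) := by
      intro r
      rcases (hx l r).lt_or_eq with hpos | hzero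
      · have := hLl_eq r hpos
        linear_combination x l r * this
      · rw [← hzero]; ring
    calc (∑ r, x l r * c r (X r)) = ∑ r, (x l r * Ll - (x l r)^2 * c' r (X r)) :=
          Finset.sum_congr rfl (fun r _ => hpt r)
      _ = Ll * Tl - Al := by
          rw [Finset.sum_sub_distrib, hTldef, hAldef, ← Finset.sum_mul]
          ring
  rw [hsumk, hsuml, one_div_mul_eq_div, one_div_mul_eq_div, div_le_div_iff₀ hTk hTl]
  nlinarith [mul_le_mul_of_nonneg_right I1 hTk.le, I2, mul_pos hTk hTl]
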